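/- Let (X,d) be a compact metric space and let f : X → X be continuous. If f has h-shadowing (on all of X), then f has s-limit shadowing and limit shadowing (on all of X). -/
import Mathlib


open Metric Filter Topology Set

section Defs

variable {X : Type*} [MetricSpace X]

/-- `x` is a `δ`-pseudo-orbit for `f`. -/
def IsPseudoOrbit (f : X → X) (δ : ℝ) (x : ℕ → X) : Prop :=
  ∀ n : ℕ, dist (f (x n)) (x (n + 1)) < δ

/-- `x` is an asymptotic pseudo-orbit for `f`. -/
def IsAsymptoticOrbit (f : X → X) (x : ℕ → X) : Prop :=
  Filter.Tendsto (fun n => dist (f (x n)) (x (n + 1))) Filter.atTop (nhds 0)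

/-- the point `y` `ε`-shadows the sequence `x`. -/
def Shadows (f : X → X) (ε : ℝ) (y : X) (x : ℕ → X) : Prop :=
  ∀ n : ℕ, dist (f^[n] y) (x n) < ε

/-- the point `y` asymptotically shadows the sequence `x`. -/
def AsympShadows (f : X → X) (y : X) (x : ℕ → X) : Prop :=
  Filter.Tendsto (fun n => dist (f^[n] y) (x n)) Filter.atTop (nhds 0)

/-- `f` has shadowing on `Y`. -/
def ShadowingOn (f : X → X) (Y : Set X) : Prop :=
  ∀ ε > 0, ∃ δ > 0, ∀ x : ℕ → X, (∀ n, x n ∈ Y) → IsPseudoOrbit f δ x →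
    ∃ y : X, Shadows f ε y x

/-- `f` has h-shadowing on `Y`. -/
def HShadowingOn (f : X → X) (Y : Set X) : Prop :=
  ∀ ε > 0, ∃ δ > 0, ∀ (x : ℕ → X) (m : ℕ), (∀ i ≤ m, x i ∈ Y) →
    (∀ i < m, dist (f (x i)) (x (i + 1)) < δ) →
    ∃ y : X, (∀ i < m, dist (f^[i] y) (x i) < ε) ∧ f^[m] y = x m

/-- `f` has limit shadowing on `Y`. -/
def LimitShadowingOn (f : X → X) (Y : Set X) : Prop :=
  ∀ x : ℕ → X, (∀ n, x n ∈ Y) → IsAsymptoticOrbit f x → ∃ y : X, AsympShadows f y x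

/-- `f` has s-limit shadowing on `Y`. -/
def SLimitShadowingOn (f : X → X) (Y : Set X) : Prop :=
  ∀ ε > 0, ∃ δ > 0,
    (∀ x : ℕ → X, (∀ n, x n ∈ Y) → IsPseudoOrbit f δ x → ∃ y : X, Shadows f ε y x) ∧
    (∀ x : ℕ → X, (∀ n, x n ∈ Y) → IsPseudoOrbit f δ x → IsAsymptoticOrbit f x →
      ∃ y : X, Shadows f ε y x ∧ AsympShadows f y x)

end Defs

section Aux

variable {X : Type*} [MetricSpace X]

def HSMod (f : X → X) (d e : ℝ) : Prop :=
  ∀ (x : ℕ → X) (m : ℕ), (∀ i < m, dist (f (x i)) (x (i + 1)) < d) →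
    ∃ y, (∀ i < m, dist (f^[i] y) (x i) < e) ∧ f^[m] y = x m

lemma glue (f : X → X) (ε δ : ℕ → ℝ) (hε : ∀ k, 0 < ε k)
    (hmod : ∀ k, HSMod f (δ k) (ε k)) (hεδ : ∀ k, ε (k + 1) ≤ δ k / 2)
    (n : ℕ → ℕ) (hn : StrictMono n) (x : ℕ → X)
    (hx : ∀ k i, n k ≤ i → i < n (k + 1) → dist (f (x i)) (x (i + 1)) < δ k / 2) (K : ℕ) :
    ∃ z, ∀ k i, k ≤ K → n k ≤ i → i < n (k + 1) →
        dist (f^[i - n 0] z) (x i) < ε k := by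
  suffices h : ∀ t j, j + t = K + 1 → ∃ z,
      f^[n (K + 1) - n j] z = x (n (K + 1)) ∧ dist z (x (n j)) < ε j ∧
      ∀ k i, j ≤ k → k ≤ K → n k ≤ i → i < n (k + 1) →
        dist (f^[i - n j] z) (x i) < ε k by
    obtain ⟨z, _, _, hz⟩ := h (K + 1) 0 (by omega)
    exact ⟨z, fun k i hk => hz k i (Nat.zero_le k) hk⟩
  intro t
  induction t with
  | zero =>
    intro j hj
    have hj' : j = K + 1 := by omega
    subst hj'
    refine ⟨x (n (K + 1)), by simp, by simpa using hε (K + 1), ?_⟩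
    intro k i hk hk'
    exact ((by omega : False)).elim
  | succ t ih =>
    intro j hj
    obtain ⟨z', hz'end, hz'dist, hz'blocks⟩ := ih (j + 1) (by omega)
    have hjK : j ≤ K := by omega
    have hnlt : n j < n (j + 1) := hn (by omega)
    set L := n (j + 1) - n j with hL
    have hL1 : 1 ≤ L := by omega
    have hδpos : 0 < δ j := by have := hεδ j; have := hε (j + 1); linarith
    set w : ℕ → X := fun i => if i < L then x (n j + i) else z' with hw
    have hwL : w L = z' := if_neg (lt_irrefl L)
    have hsteps : ∀ i < L, dist (f (w i)) (w (i + 1)) < δ j := by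
      intro i hi
      have hwi : w i = x (n j + i) := if_pos hi
      have hstep : dist (f (x (n j + i))) (x (n j + i + 1)) < δ j / 2 :=
        hx j (n j + i) (by omega) (by omega)
      rcases lt_or_ge (i + 1) L with h1 | h1
      · have hwi1 : w (i + 1) = x (n j + (i + 1)) := if_pos h1
        rw [hwi, hwi1, show n j + (i + 1) = n j + i + 1 by omega]
        linarith
      · have hiL : i + 1 = L := by omega
        have hwi1 : w (i + 1) = z' := if_neg (by omega)
        have hni : n j + i + 1 = n (j + 1) := by omega
        rw [hwi, hwi1]
        calc dist (f (x (n j + i))) z'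
            ≤ dist (f (x (n j + i))) (x (n j + i + 1)) + dist (x (n j + i + 1)) z' :=
              dist_triangle _ _ _
          _ < δ j / 2 + ε (j + 1) := by
              refine add_lt_add hstep ?_
              rw [hni, dist_comm]
              exact hz'dist
          _ ≤ δ j := by have := hεδ j; linarith
    obtain ⟨z, hzsh, hzend⟩ := hmod j w L hsteps
    rw [hwL] at hzend
    have hnjK : n (j + 1) ≤ n (K + 1) := hn.monotone (by omega)
    refine ⟨z, ?_, ?_, ?_⟩
    · have harith : n (K + 1) - n j = (n (K + 1) - n (j + 1)) + L := by omega
      rw [harith, Function.iterate_add_apply, hzend, hz'end]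
    · have h0 := hzsh 0 hL1
      have hw0 : w 0 = x (n j) := by
        simp only [hw]
        rw [if_pos (by omega : 0 < L)]
        norm_num
      rwa [Function.iterate_zero_apply, hw0] at h0
    · intro k i hjk hkK hki hki'
      rcases eq_or_lt_of_le hjk with hkj | hkj
      · subst hkj
        have hiL' : i - n j < L := by omega
        have := hzsh (i - n j) hiL'
        have hwi : w (i - n j) = x i := by
          simp only [hw]
          rw [if_pos hiL', show n j + (i - n j) = i by omega]
        rwa [hwi] at this
      · have hkk : j + 1 ≤ k := hkj
        have hni : n (j + 1) ≤ n k := hn.monotone hkk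
        have harith2 : i - n j = (i - n (j + 1)) + L := by omega
        rw [harith2, Function.iterate_add_apply, hzend]
        exact hz'blocks k i hkk hkK hki hki'
lemma glueLimit [CompactSpace X] (f : X → X) (hf : Continuous f) (ε δ : ℕ → ℝ)
    (hε : ∀ k, 0 < ε k) (hmod : ∀ k, HSMod f (δ k) (ε k)) (hεδ : ∀ k, ε (k + 1) ≤ δ k / 2)
    (n : ℕ → ℕ) (hn : StrictMono n) (x : ℕ → X)
    (hx : ∀ k i, n k ≤ i → i < n (k + 1) → dist (f (x i)) (x (i + 1)) < δ k / 2) :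
    ∃ z, ∀ k i, n k ≤ i → i < n (k + 1) → dist (f^[i - n 0] z) (x i) ≤ ε k := by
  choose zs hzs using fun K => glue f ε δ hε hmod hεδ n hn x hx K
  obtain ⟨y, -, φ, hφ, hconv⟩ := isCompact_univ.tendsto_subseq (fun K => mem_univ (zs K))
  refine ⟨y, fun k i hki hki' => ?_⟩
  have hcont : Tendsto (fun m => dist (f^[i - n 0] (zs (φ m))) (x i)) atTop
      (𝓝 (dist (f^[i - n 0] y) (x i))) :=
    Tendsto.dist (((hf.iterate _).tendsto y).comp hconv) tendsto_const_nhds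
  refine le_of_tendsto hcont ?_
  filter_upwards [eventually_ge_atTop k] with m hm
  exact (hzs (φ m) k i (le_trans hm hφ.le_apply) hki hki').le

lemma shadow_of_hmod [CompactSpace X] (f : X → X) (hf : Continuous f) {d e : ℝ}
    (hm : HSMod f d e) (x : ℕ → X) (hx : ∀ i, dist (f (x i)) (x (i + 1)) < d) :
    ∃ y, ∀ i, dist (f^[i] y) (x i) ≤ e := by
  choose ys hys using fun m => hm x m (fun i _ => hx i)
  obtain ⟨y, -, φ, hφ, hconv⟩ := isCompact_univ.tendsto_subseq (fun m => mem_univ (ys m))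
  refine ⟨y, fun i => ?_⟩
  have hcont : Tendsto (fun m => dist (f^[i] (ys (φ m))) (x i)) atTop
      (𝓝 (dist (f^[i] y) (x i))) :=
    Tendsto.dist (((hf.iterate _).tendsto y).comp hconv) tendsto_const_nhds
  refine le_of_tendsto hcont ?_
  filter_upwards [eventually_ge_atTop (i + 1)] with m hm'
  refine ((hys (φ m)).1 i ?_).le
  have : m ≤ φ m := hφ.le_apply
  omega

lemma exists_block (n : ℕ → ℕ) (hn : StrictMono n) (i : ℕ) (hi : n 0 ≤ i) :
    ∃ k, n k ≤ i ∧ i < n (k + 1) := by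
  have hex : ∃ k, i < n (k + 1) :=
    ⟨i, lt_of_lt_of_le (Nat.lt_succ_self i) hn.le_apply⟩
  refine ⟨Nat.find hex, ?_, Nat.find_spec hex⟩
  rcases Nat.eq_zero_or_pos (Nat.find hex) with h0 | h0
  · rwa [h0]
  · have hmin := Nat.find_min hex (m := Nat.find hex - 1) (by omega)
    rw [show Nat.find hex - 1 + 1 = Nat.find hex by omega] at hmin
    omega
lemma mainlem [CompactSpace X] (f : X → X) (hf : Continuous f)
    (hmod : ∀ e : ℝ, 0 < e → ∃ d, 0 < d ∧ HSMod f d e)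
    (x : ℕ → X)
    (hax : ∀ τ : ℝ, 0 < τ → ∃ N, ∀ i ≥ N, dist (f (x i)) (x (i + 1)) < τ)
    (e0 : ℝ) (he0 : 0 < e0) (d0 : ℝ) (hd0pos : 0 < d0) (hd0 : HSMod f d0 e0) (n0 : ℕ)
    (hx0 : ∀ i, n0 ≤ i → dist (f (x i)) (x (i + 1)) < d0 / 2) :
    ∃ z, (∀ i, n0 ≤ i → dist (f^[i - n0] z) (x i) ≤ e0) ∧
      Tendsto (fun m => dist (f^[m - n0] z) (x m)) atTop (𝓝 0) := by
  obtain ⟨F, hF⟩ : ∃ F : ℝ → ℝ, ∀ e : ℝ, 0 < e → 0 < F e ∧ HSMod f (F e) e := by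
    choose! F h1 h2 using hmod
    exact ⟨F, fun e he => ⟨h1 e he, h2 e he⟩⟩
  let εp : ℕ → ℝ × ℝ := fun k => Nat.rec (e0, d0)
      (fun _ p => (min (p.1 / 2) (p.2 / 2), F (min (p.1 / 2) (p.2 / 2)))) k
  have hS : ∀ k, εp (k + 1) =
      (min ((εp k).1 / 2) ((εp k).2 / 2), F (min ((εp k).1 / 2) ((εp k).2 / 2))) :=
    fun k => rfl
  have h0 : εp 0 = (e0, d0) := rfl
  have hkey : ∀ k, 0 < (εp k).1 ∧ 0 < (εp k).2 ∧ HSMod f ((εp k).2) ((εp k).1) := by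
    intro k
    induction k with
    | zero => exact ⟨he0, hd0pos, hd0⟩
    | succ k ih =>
      have hpos : 0 < min ((εp k).1 / 2) ((εp k).2 / 2) :=
        lt_min (by linarith [ih.1]) (by linarith [ih.2.1])
      have := hF _ hpos
      rw [hS k]
      exact ⟨hpos, this.1, this.2⟩
  have hεδ : ∀ k, (εp (k + 1)).1 ≤ (εp k).2 / 2 := by
    intro k; rw [hS k]; exact min_le_right _ _
  have hhalf : ∀ k, (εp (k + 1)).1 ≤ (εp k).1 / 2 := by
    intro k; rw [hS k]; exact min_le_left _ _
  have hmono : ∀ k k', k ≤ k' → (εp k').1 ≤ (εp k).1 := by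
    intro k k' hk
    induction k' with
    | zero =>
      have hk0 : k = 0 := by omega
      subst hk0; exact le_refl _
    | succ k' ih =>
      rcases Nat.lt_or_ge k (k' + 1) with h | h
      · have := ih (by omega)
        have := hhalf k'
        have := (hkey k').1
        linarith
      · have : k = k' + 1 := by omega
        subst this; exact le_refl _
  have hdecay : ∀ k, (εp k).1 ≤ e0 / 2 ^ k := by
    intro k
    induction k with
    | zero => simp [h0]
    | succ k ih =>
      have h1 := hhalf k
      have h2 : (εp k).1 / 2 ≤ e0 / 2 ^ k / 2 := by linarith
      have h3 : e0 / 2 ^ k / 2 = e0 / 2 ^ (k + 1) := by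
        rw [pow_succ]; ring
      linarith
  choose N hN using fun k => hax ((εp k).2 / 2) (half_pos (hkey k).2.1)
  let n : ℕ → ℕ := fun k => Nat.rec n0 (fun k nk => max (nk + 1) (N (k + 1))) k
  have hn0 : n 0 = n0 := rfl
  have hnS : ∀ k, n (k + 1) = max (n k + 1) (N (k + 1)) := fun k => rfl
  have hnmono : StrictMono n := strictMono_nat_of_lt_succ (fun k => by rw [hnS]; omega)
  have hblocks : ∀ k i, n k ≤ i → i < n (k + 1) →
      dist (f (x i)) (x (i + 1)) < (εp k).2 / 2 := by
    intro k i hki _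
    cases k with
    | zero => exact hx0 i (by rwa [hn0] at hki)
    | succ k =>
      refine hN (k + 1) i (le_trans ?_ hki)
      rw [hnS]; omega
  obtain ⟨z, hz⟩ := glueLimit f hf (fun k => (εp k).1) (fun k => (εp k).2)
      (fun k => (hkey k).1) (fun k => (hkey k).2.2) hεδ n hnmono x hblocks
  rw [hn0] at hz
  refine ⟨z, ?_, ?_⟩
  · intro i hi
    obtain ⟨k, hk1, hk2⟩ := exists_block n hnmono i (by rwa [hn0])
    calc dist (f^[i - n0] z) (x i) ≤ (εp k).1 := hz k i hk1 hk2
      _ ≤ (εp 0).1 := hmono 0 k (Nat.zero_le k)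
      _ = e0 := by rw [h0]
  · rw [Metric.tendsto_atTop]
    intro η hη
    obtain ⟨k0, hk0⟩ : ∃ k0, (εp k0).1 < η := by
      obtain ⟨k0, hk0⟩ := exists_pow_lt_of_lt_one (div_pos hη he0)
        (by norm_num : (1 : ℝ) / 2 < 1)
      refine ⟨k0, lt_of_le_of_lt (hdecay k0) ?_⟩
      have heq : e0 / 2 ^ k0 = (1 / 2 : ℝ) ^ k0 * e0 := by
        rw [one_div, inv_pow]; field_simp
      rw [heq]
      exact (lt_div_iff₀ he0).mp hk0
    refine ⟨n k0, fun m hm => ?_⟩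
    have hmn0 : n0 ≤ m := by
      have : n 0 ≤ n k0 := hnmono.monotone (Nat.zero_le k0)
      rw [hn0] at this; omega
    obtain ⟨k, hk1, hk2⟩ := exists_block n hnmono m (by rwa [hn0])
    have hkk0 : k0 ≤ k := by
      by_contra h
      push_neg at h
      have := hnmono.monotone (show k + 1 ≤ k0 by omega)
      omega
    have hd := hz k m hk1 hk2
    rw [Real.dist_eq, sub_zero, abs_of_nonneg dist_nonneg]
    exact lt_of_le_of_lt (hd.trans (hmono k0 k hkk0)) hk0

end Aux


theorem stmt7 {X : Type*} [MetricSpace X] [CompactSpace X] (f : X → X)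
    (hf : Continuous f) (hh : HShadowingOn f Set.univ) :
    SLimitShadowingOn f Set.univ ∧ LimitShadowingOn f Set.univ := by
  have hmod : ∀ e : ℝ, 0 < e → ∃ d, 0 < d ∧ HSMod f d e := by
    intro e he
    obtain ⟨d, hd, h⟩ := hh e he
    exact ⟨d, hd, fun x m hs => h x m (fun _ _ => mem_univ _) hs⟩
  have haxconv : ∀ x : ℕ → X, IsAsymptoticOrbit f x →
      ∀ τ : ℝ, 0 < τ → ∃ N, ∀ i ≥ N, dist (f (x i)) (x (i + 1)) < τ := by
    intro x hax τ hτ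
    obtain ⟨N, hN⟩ := Metric.tendsto_atTop.mp hax τ hτ
    refine ⟨N, fun i hi => ?_⟩
    have := hN i hi
    rwa [Real.dist_eq, sub_zero, abs_of_nonneg dist_nonneg] at this
  constructor
  · intro e he
    obtain ⟨d, hd, hm⟩ := hmod (e / 2) (by linarith)
    refine ⟨d / 2, by linarith, ?_, ?_⟩
    · intro x _ hx
      obtain ⟨y, hy⟩ := shadow_of_hmod f hf hm x (fun i => lt_trans (hx i) (by linarith))
      exact ⟨y, fun i => lt_of_le_of_lt (hy i) (by linarith)⟩
    · intro x _ hx hax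
      obtain ⟨z, hz1, hz2⟩ := mainlem f hf hmod x (haxconv x hax) (e / 2) (by linarith)
        d hd hm 0 (fun i _ => hx i)
      refine ⟨z, fun i => ?_, ?_⟩
      · have := hz1 i (Nat.zero_le i)
        rw [Nat.sub_zero] at this
        linarith
      · show Tendsto (fun m => dist (f^[m] z) (x m)) atTop (𝓝 0)
        simpa using hz2
  · intro x _ hax
    obtain ⟨d1, hd1, hm1⟩ := hmod 1 one_pos
    set e0 : ℝ := min 1 (d1 / 4) with he0def
    have he0 : 0 < e0 := lt_min one_pos (by linarith)
    have he0d1 : e0 ≤ d1 / 4 := min_le_right _ _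
    obtain ⟨d0, hd0, hm0⟩ := hmod e0 he0
    set τ : ℝ := min (d1 / 2) (d0 / 2) with hτdef
    have hτ : 0 < τ := lt_min (by linarith) (by linarith)
    obtain ⟨N', hN'⟩ := haxconv x hax τ hτ
    obtain ⟨p, -, φ, hφ, hconv⟩ := isCompact_univ.tendsto_subseq (fun m => mem_univ (x m))
    obtain ⟨m0, hm0'⟩ := Metric.tendsto_atTop.mp hconv (d1 / 4) (by linarith)
    set a : ℕ := φ (max m0 (max N' 1)) with hadef
    set b : ℕ := φ (max m0 (max N' 1) + 1) with hbdef
    have hab : a < b := hφ (Nat.lt_succ_self _)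
    have haN : N' ≤ a :=
      le_trans (le_trans (le_max_left N' 1) (le_max_right m0 _)) hφ.le_apply
    have ha1 : 1 ≤ a :=
      le_trans (le_trans (le_max_right N' 1) (le_max_right m0 _)) hφ.le_apply
    have hdab : dist (x a) (x b) < d1 / 2 := by
      have h1 : dist (x a) p < d1 / 4 := hm0' (max m0 (max N' 1)) (le_max_left _ _)
      have h2 : dist (x b) p < d1 / 4 :=
        hm0' (max m0 (max N' 1) + 1) (le_trans (le_max_left _ _) (Nat.le_succ _))
      calc dist (x a) (x b) ≤ dist (x a) p + dist p (x b) := dist_triangle _ _ _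
        _ < d1 / 4 + d1 / 4 := add_lt_add h1 (by rw [dist_comm]; exact h2)
        _ = d1 / 2 := by ring
    set M : ℕ := a + 1 with hMdef
    obtain ⟨z, hz1, hz2⟩ := mainlem f hf hmod x (haxconv x hax) e0 he0 d0 hd0 hm0 M
      (fun i hi => lt_of_lt_of_le (hN' i (by omega)) (min_le_right _ _))
    have hzM : dist z (x M) ≤ e0 := by
      have := hz1 M (le_refl M)
      simpa using this
    set ℓ : ℕ := b - a with hldef
    have hℓ : 0 < ℓ := by omega
    set t : ℕ := (ℓ - a % ℓ) % ℓ with htdef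
    have htl : t < ℓ := Nat.mod_lt _ hℓ
    have hamod : a % ℓ < ℓ := Nat.mod_lt _ hℓ
    have ht : (a + t) % ℓ = 0 := by
      rcases eq_or_ne (a % ℓ) 0 with h | h
      · have htt : t = 0 := by rw [htdef, h, Nat.sub_zero, Nat.mod_self]
        rw [htt, Nat.add_zero, h]
      · have htt : t = ℓ - a % ℓ := by
          rw [htdef]; exact Nat.mod_eq_of_lt (by omega)
        have hdm := Nat.div_add_mod a ℓ
        have hsum : a + t = ℓ * (a / ℓ) + ℓ := by omega
        rw [hsum, show ℓ * (a / ℓ) + ℓ = ℓ * (a / ℓ + 1) by ring, Nat.mul_mod_right]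
    set g : ℕ → ℕ := fun i => if a ≤ i then i else a + (i + t) % ℓ with hgdef
    set q : ℕ → X := fun i => if i < M then x (g i) else z with hqdef
    have hqsteps : ∀ i < M, dist (f (q i)) (q (i + 1)) < d1 := by
      intro i hi
      rcases eq_or_lt_of_le (Nat.lt_succ_iff.mp hi) with hia | hia
      · -- i = a : last step, into z
        have hq1 : q i = x a := by
          simp only [hqdef, hgdef]
          rw [if_pos (by omega : i < M), if_pos (by omega : a ≤ i), hia]
        have hq2 : q (i + 1) = z := by
          simp only [hqdef]
          rw [if_neg (by omega)]
        rw [hq1, hq2]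
        calc dist (f (x a)) z
            ≤ dist (f (x a)) (x (a + 1)) + dist (x (a + 1)) z := dist_triangle _ _ _
          _ < τ + e0 := by
              refine add_lt_add_of_lt_of_le (hN' a haN) ?_
              rw [dist_comm]
              exact hzM
          _ ≤ d1 / 2 + d1 / 4 := add_le_add (min_le_left _ _) he0d1
          _ < d1 := by linarith
      · -- i < a : loop zone
        have hq1 : q i = x (a + (i + t) % ℓ) := by
          simp only [hqdef, hgdef]
          rw [if_pos (by omega : i < M), if_neg (by omega : ¬ a ≤ i)]
        have hq2 : q (i + 1) = x (a + (i + 1 + t) % ℓ) := by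
          rcases eq_or_lt_of_le (show i + 1 ≤ a by omega) with h | h
          · have h0' : (i + 1 + t) % ℓ = 0 := by rw [h]; exact ht
            simp only [hqdef, hgdef]
            rw [if_pos (by omega : i + 1 < M), if_pos (by omega : a ≤ i + 1), h0',
              Nat.add_zero, ← h]
          · simp only [hqdef, hgdef]
            rw [if_pos (by omega : i + 1 < M), if_neg (by omega : ¬ a ≤ i + 1)]
        set r : ℕ := (i + t) % ℓ with hrdef
        have hrl : r < ℓ := Nat.mod_lt _ hℓ
        have harN : N' ≤ a + r := by omega
        rcases eq_or_lt_of_le (Nat.succ_le_of_lt hrl) with hre | hre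
        · -- jump : r + 1 = ℓ
          have hnext : (i + 1 + t) % ℓ = 0 := by
            rw [show i + 1 + t = (i + t) + 1 by omega, Nat.add_mod, ← hrdef]
            rcases eq_or_lt_of_le (Nat.one_le_iff_ne_zero.mpr (by omega) : 1 ≤ ℓ) with hl1 | hl1
            · rw [← hl1]; omega
            · rw [Nat.mod_eq_of_lt hl1, show r + 1 = ℓ from hre, Nat.mod_self]
          have hb1 : a + r + 1 = b := by omega
          rw [hq1, hq2, hnext, Nat.add_zero]
          calc dist (f (x (a + r))) (x a)
              ≤ dist (f (x (a + r))) (x (a + r + 1)) + dist (x (a + r + 1)) (x a) :=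
                dist_triangle _ _ _
            _ < τ + d1 / 2 := add_lt_add (hN' (a + r) harN)
                (by rw [hb1, dist_comm]; exact hdab)
            _ ≤ d1 := by
                have := min_le_left (d1 / 2) (d0 / 2)
                linarith
        · -- normal step : r + 1 < ℓ
          have hnext : (i + 1 + t) % ℓ = r + 1 := by
            rw [show i + 1 + t = (i + t) + 1 by omega, Nat.add_mod, ← hrdef,
              Nat.mod_eq_of_lt (show 1 < ℓ by omega)]
            exact Nat.mod_eq_of_lt hre
          rw [hq1, hq2, hnext, show a + (r + 1) = a + r + 1 by omega]
          calc dist (f (x (a + r))) (x (a + r + 1)) < τ := hN' (a + r) harN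
            _ ≤ d1 / 2 := min_le_left _ _
            _ < d1 := by linarith
    obtain ⟨y, -, hyM⟩ := hm1 q M hqsteps
    have hyz : f^[M] y = z := by
      rw [hyM]
      simp only [hqdef]
      rw [if_neg (lt_irrefl M)]
    refine ⟨y, ?_⟩
    show Tendsto (fun m => dist (f^[m] y) (x m)) atTop (𝓝 0)
    refine Tendsto.congr' ?_ hz2
    filter_upwards [eventually_ge_atTop M] with m hm
    have : f^[m] y = f^[m - M] z := by
      conv_lhs => rw [show m = (m - M) + M by omega]
      rw [Function.iterate_add_apply, hyz]
    rw [this]
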